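/- Let n be a positive integer, C an additive category, and E : C^op × C → Ab a biadditive functor. Let ⟨X•,δ⟩ and ⟨Y•,ρ⟩ be E-attached complexes and f• : ⟨X•,δ⟩ → ⟨Y•,ρ⟩ a morphism of E-attached complexes which is a homotopy equivalence of complexes. Then ⟨X•,δ⟩ is an n-exangle if and only if ⟨Y•,ρ⟩ is an n-exangle. -/

import Mathlib

/-!
Basic definitions for the theory of `n`-exangulated categories
(Herschend–Liu–Nakaoka): `(n+2)`-term complexes in an additive category,
morphisms of such complexes, homotopies, and homotopy equivalences.

A complex is recorded as a function `obj : ℕ → C` together with differentials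
`d i : obj i ⟶ obj (i+1)`; only the components in degrees `0, …, n+1`
(and the differentials `d 0, …, d n`) are relevant, which is why all
conditions are imposed only in that range.
-/

open CategoryTheory CategoryTheory.Limits Opposite

universe w v u

namespace NExangulated

variable (C : Type u) [Category.{v} C] [Preadditive C]

/-- An `(n+2)`-term complex `X^0 → X^1 → ⋯ → X^{n+1}` in `C`. -/
structure NComplex (n : ℕ) where
  /-- the objects; only `obj 0, …, obj (n+1)` are relevant -/
  obj : ℕ → C
  /-- the differentials -/
  d : ∀ i : ℕ, obj i ⟶ obj (i + 1)
  /-- `d^{i+1} ∘ d^i = 0` for `0 ≤ i ≤ n-1` -/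
  d_comp_d : ∀ i : ℕ, i + 1 ≤ n → d i ≫ d (i + 1) = 0

variable {C}
variable {n : ℕ}

/-- A morphism of `(n+2)`-term complexes. -/
structure NComplexHom (X Y : NComplex C n) where
  /-- the components; only `f 0, …, f (n+1)` are relevant -/
  f : ∀ i : ℕ, X.obj i ⟶ Y.obj i
  /-- compatibility with the differentials, for `0 ≤ i ≤ n` -/
  comm : ∀ i : ℕ, i ≤ n → f i ≫ Y.d i = X.d i ≫ f (i + 1)

/-- The identity morphism of complexes. -/
def NComplexHom.id (X : NComplex C n) : NComplexHom X X where
  f _ := 𝟙 _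
  comm _ _ := by simp

/-- Composition of morphisms of complexes (in diagrammatic order:
`f.comp g` is `g• ∘ f•`). -/
def NComplexHom.comp {X Y Z : NComplex C n} (f : NComplexHom X Y) (g : NComplexHom Y Z) :
    NComplexHom X Z where
  f i := f.f i ≫ g.f i
  comm i hi := by
    rw [Category.assoc, g.comm i hi, ← Category.assoc, f.comm i hi, Category.assoc]

/-- `φ` is a homotopy from `f` to `g`:  here `φ i : X^{i+1} ⟶ Y^i` plays the role of
the component `φ^{i+1}` (for `0 ≤ i ≤ n`, i.e. `1 ≤ i+1 ≤ n+1`). -/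
def IsHomotopy {X Y : NComplex C n} (f g : NComplexHom X Y)
    (φ : ∀ i : ℕ, X.obj (i + 1) ⟶ Y.obj i) : Prop :=
  (g.f 0 - f.f 0 = X.d 0 ≫ φ 0) ∧
    (∀ i : ℕ, i + 1 ≤ n →
      g.f (i + 1) - f.f (i + 1) = φ i ≫ Y.d i + X.d (i + 1) ≫ φ (i + 1)) ∧
    (g.f (n + 1) - f.f (n + 1) = φ n ≫ Y.d n)

/-- Two morphisms of complexes are homotopic. -/
def Homotopic {X Y : NComplex C n} (f g : NComplexHom X Y) : Prop :=
  ∃ φ, IsHomotopy f g φ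

/-- `g` is a homotopy inverse of `f`. -/
def IsHomotopyInverse {X Y : NComplex C n} (f : NComplexHom X Y) (g : NComplexHom Y X) : Prop :=
  Homotopic (f.comp g) (NComplexHom.id X) ∧ Homotopic (g.comp f) (NComplexHom.id Y)

/-- `f` is a homotopy equivalence of complexes. -/
def IsHomotopyEquiv {X Y : NComplex C n} (f : NComplexHom X Y) : Prop :=
  ∃ g, IsHomotopyInverse f g

/-- Exactness of a two-term sequence of (pointed) sets at the middle term:
the image of `f` equals the kernel of `g`. -/
def ExactAt {α β γ : Type*} [Zero γ] (f : α → β) (g : β → γ) : Prop :=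
  ∀ b : β, g b = 0 ↔ ∃ a : α, f a = b

end NExangulated
namespace NExangulated

variable {C : Type u} [Category.{v} C] [Preadditive C] {n : ℕ}

section E

variable (E : Cᵒᵖ ⥤ C ⥤ AddCommGrpCat.{w})

/-- `a_*δ := E(id, a)(δ)`. -/
def pushE {A A' B : C} (a : A ⟶ A') (δ : (E.obj (op B)).obj A) : (E.obj (op B)).obj A' :=
  (E.obj (op B)).map a δ

/-- `c^*δ := E(c, id)(δ)`. -/
def pullE {A B B' : C} (c : B' ⟶ B) (δ : (E.obj (op B)).obj A) : (E.obj (op B')).obj A :=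
  (E.map c.op).app A δ

/-- `⟨X, δ⟩` is an `E`-attached complex: `(d^0)_*δ = 0` and `(d^n)^*δ = 0`. -/
def IsAttached (X : NComplex C n) (δ : (E.obj (op (X.obj (n + 1)))).obj (X.obj 0)) : Prop :=
  pushE E (X.d 0) δ = 0 ∧ pullE E (X.d n) δ = 0

/-- `⟨X, δ⟩` is an `n`-exangle: for every object `Q` the two induced sequences of
abelian groups
`C(Q,X^0) → ⋯ → C(Q,X^{n+1}) → E(Q,X^0)` and
`C(X^{n+1},Q) → ⋯ → C(X^0,Q) → E(X^{n+1},Q)`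
are exact at every term having both an incoming and an outgoing map. -/
def IsExangle (X : NComplex C n) (δ : (E.obj (op (X.obj (n + 1)))).obj (X.obj 0)) : Prop :=
  (∀ Q : C,
      (∀ i : ℕ, i + 1 ≤ n →
        ExactAt (fun u : Q ⟶ X.obj i => u ≫ X.d i)
          (fun u : Q ⟶ X.obj (i + 1) => u ≫ X.d (i + 1))) ∧
      ExactAt (fun u : Q ⟶ X.obj n => u ≫ X.d n)
        (fun u : Q ⟶ X.obj (n + 1) => pullE E u δ)) ∧
  (∀ Q : C,
      (∀ i : ℕ, i + 1 ≤ n →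
        ExactAt (fun u : X.obj (i + 2) ⟶ Q => X.d (i + 1) ≫ u)
          (fun u : X.obj (i + 1) ⟶ Q => X.d i ≫ u)) ∧
      ExactAt (fun u : X.obj 1 ⟶ Q => X.d 0 ≫ u)
        (fun u : X.obj 0 ⟶ Q => pushE E u δ))

end E

end NExangulated
namespace NExangulated

variable {C : Type u} [Category.{v} C] [Preadditive C] [HasFiniteBiproducts C] {n : ℕ}


section Helpers

variable {C : Type u} [Category.{v} C] [Preadditive C] {n : ℕ}
variable (E : Cᵒᵖ ⥤ C ⥤ AddCommGrpCat.{w})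

lemma pushE_comp {A A' A'' B : C} (a : A ⟶ A') (b : A' ⟶ A'') (δ : (E.obj (op B)).obj A) :
    pushE E (a ≫ b) δ = pushE E b (pushE E a δ) := by
  simp [pushE, Functor.map_comp]

lemma pullE_comp {A B B' B'' : C} (c' : B'' ⟶ B') (c : B' ⟶ B) (δ : (E.obj (op B)).obj A) :
    pullE E (c' ≫ c) δ = pullE E c' (pullE E c δ) := by
  simp [pullE, op_comp, Functor.map_comp]

lemma pushE_pullE {A A' B B' : C} (a : A ⟶ A') (c : B' ⟶ B) (δ : (E.obj (op B)).obj A) :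
    pushE E a (pullE E c δ) = pullE E c (pushE E a δ) :=
  (NatTrans.naturality_apply (E.map c.op) a δ).symm

lemma pushE_zero {A A' B : C} (a : A ⟶ A') : pushE E a (0 : (E.obj (op B)).obj A) = 0 :=
  map_zero _

lemma pullE_zero {A B B' : C} (c : B' ⟶ B) : pullE E c (0 : (E.obj (op B)).obj A) = 0 :=
  map_zero _

lemma pushE_id {A B : C} (δ : (E.obj (op B)).obj A) : pushE E (𝟙 A) δ = δ := by
  simp [pushE]

lemma pullE_id {A B : C} (δ : (E.obj (op B)).obj A) : pullE E (𝟙 B) δ = δ := by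
  simp [pullE]

lemma pushE_sub [∀ B : Cᵒᵖ, (E.obj B).Additive] {A A' B : C} (a b : A ⟶ A')
    (δ : (E.obj (op B)).obj A) :
    pushE E (a - b) δ = pushE E a δ - pushE E b δ := by
  simp only [pushE, Functor.map_sub]
  rfl

lemma op_sub' {A B : C} (a b : A ⟶ B) : (a - b).op = a.op - b.op := by
  simp [sub_eq_add_neg, op_add, op_neg]

lemma pullE_sub [E.Additive] {A B B' : C} (c c' : B' ⟶ B) (δ : (E.obj (op B)).obj A) :
    pullE E (c - c') δ = pullE E c δ - pullE E c' δ := by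
  simp only [pullE, op_sub', Functor.map_sub, NatTrans.app_sub]
  rfl

@[simp] lemma NComplexHom.comp_f {X Y Z : NComplex C n} (f : NComplexHom X Y)
    (g : NComplexHom Y Z) (i : ℕ) : (f.comp g).f i = f.f i ≫ g.f i := rfl

@[simp] lemma NComplexHom.id_f (X : NComplex C n) (i : ℕ) :
    (NComplexHom.id X).f i = 𝟙 (X.obj i) := rfl

/-- The one-directional statement: if `f : ⟨X,δ⟩ → ⟨Y,ρ⟩` is a morphism of attached
complexes with a homotopy-inverse-like `g` which is also compatible with `δ, ρ`,
and `⟨X,δ⟩` is an exangle, then so is `⟨Y,ρ⟩`. -/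
theorem isExangle_of_homotopy (X Y : NComplex C n)
    (δ : (E.obj (op (X.obj (n + 1)))).obj (X.obj 0))
    (ρ : (E.obj (op (Y.obj (n + 1)))).obj (Y.obj 0))
    (hY : IsAttached E Y ρ)
    (f : NComplexHom X Y) (g : NComplexHom Y X)
    (hf : pushE E (f.f 0) δ = pullE E (f.f (n + 1)) ρ)
    (hg : pushE E (g.f 0) ρ = pullE E (g.f (n + 1)) δ)
    (ψ : ∀ i : ℕ, Y.obj (i + 1) ⟶ Y.obj i)
    (hψ : IsHomotopy (g.comp f) (NComplexHom.id Y) ψ)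
    (hXe : IsExangle E X δ) : IsExangle E Y ρ := by
  obtain ⟨hψ0, hψm, hψt⟩ := hψ
  constructor
  · intro Q
    constructor
    · -- covariant, interior positions
      intro i hi v
      dsimp only
      constructor
      · intro hv
        have hvg : (v ≫ g.f (i + 1)) ≫ X.d (i + 1) = 0 := by
          rw [Category.assoc, g.comm (i + 1) hi, ← Category.assoc, hv, zero_comp]
        obtain ⟨u, hu⟩ := (((hXe.1 Q).1 i hi) (v ≫ g.f (i + 1))).1 hvg
        dsimp only at hu
        refine ⟨u ≫ f.f i + v ≫ ψ i, ?_⟩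
        have h1 : v ≫ g.f (i + 1) ≫ f.f (i + 1) = u ≫ f.f i ≫ Y.d i := by
          rw [← Category.assoc, ← hu, Category.assoc, ← f.comm i (Nat.le_of_succ_le hi)]
        have h2 := congrArg (fun t => v ≫ t) (hψm i hi)
        simp only [NComplexHom.comp_f, NComplexHom.id_f, Preadditive.comp_sub,
          Preadditive.comp_add, Category.comp_id, Category.assoc] at h2
        rw [show v ≫ Y.d (i + 1) ≫ ψ (i + 1) = 0 by
          rw [← Category.assoc, hv, zero_comp], add_zero] at h2
        rw [Preadditive.add_comp]
        simp only [Category.assoc]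
        rw [← h1, ← h2]
        abel
      · rintro ⟨w, rfl⟩
        rw [Category.assoc, Y.d_comp_d i hi, comp_zero]
    · -- covariant, last position
      intro v
      dsimp only
      constructor
      · intro hv
        have hvg : pullE E (v ≫ g.f (n + 1)) δ = 0 := by
          rw [pullE_comp, ← hg, ← pushE_pullE, hv, pushE_zero]
        obtain ⟨u, hu⟩ := ((hXe.1 Q).2 (v ≫ g.f (n + 1))).1 hvg
        dsimp only at hu
        refine ⟨u ≫ f.f n + v ≫ ψ n, ?_⟩
        have h1 : v ≫ g.f (n + 1) ≫ f.f (n + 1) = u ≫ f.f n ≫ Y.d n := by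
          rw [← Category.assoc, ← hu, Category.assoc, ← f.comm n le_rfl]
        have h2 := congrArg (fun t => v ≫ t) hψt
        simp only [NComplexHom.comp_f, NComplexHom.id_f, Preadditive.comp_sub,
          Category.comp_id, Category.assoc] at h2
        rw [Preadditive.add_comp]
        simp only [Category.assoc]
        rw [← h1, ← h2]
        abel
      · rintro ⟨w, rfl⟩
        rw [pullE_comp, hY.2, pullE_zero]
  · intro Q
    constructor
    · -- contravariant, interior positions
      intro i hi v
      dsimp only
      constructor
      · intro hv
        have hvf : X.d i ≫ f.f (i + 1) ≫ v = 0 := by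
          rw [← Category.assoc, ← f.comm i (Nat.le_of_succ_le hi), Category.assoc, hv,
            comp_zero]
        obtain ⟨u, hu⟩ := (((hXe.2 Q).1 i hi) (f.f (i + 1) ≫ v)).1 hvf
        dsimp only at hu
        refine ⟨g.f (i + 2) ≫ u + ψ (i + 1) ≫ v, ?_⟩
        have h1 : g.f (i + 1) ≫ f.f (i + 1) ≫ v = Y.d (i + 1) ≫ g.f (i + 2) ≫ u := by
          rw [← hu, ← Category.assoc, g.comm (i + 1) hi, Category.assoc]
        have h2 := congrArg (fun t => t ≫ v) (hψm i hi)
        simp only [NComplexHom.comp_f, NComplexHom.id_f, Preadditive.sub_comp,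
          Preadditive.add_comp, Category.id_comp, Category.assoc] at h2
        rw [hv, comp_zero, zero_add] at h2
        rw [Preadditive.comp_add]
        rw [← h1, ← h2]
        abel
      · rintro ⟨w, rfl⟩
        rw [← Category.assoc, Y.d_comp_d i hi, zero_comp]
    · -- contravariant, last position
      intro v
      dsimp only
      constructor
      · intro hv
        have hvf : pushE E (f.f 0 ≫ v) δ = 0 := by
          rw [pushE_comp, hf, pushE_pullE, hv, pullE_zero]
        obtain ⟨u, hu⟩ := ((hXe.2 Q).2 (f.f 0 ≫ v)).1 hvf
        dsimp only at hu
        refine ⟨g.f 1 ≫ u + ψ 0 ≫ v, ?_⟩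
        have h1 : g.f 0 ≫ f.f 0 ≫ v = Y.d 0 ≫ g.f 1 ≫ u := by
          rw [← hu, ← Category.assoc, g.comm 0 (Nat.zero_le n), Category.assoc]
        have h2 := congrArg (fun t => t ≫ v) hψ0
        simp only [NComplexHom.comp_f, NComplexHom.id_f, Preadditive.sub_comp,
          Category.id_comp, Category.assoc] at h2
        rw [Preadditive.comp_add]
        rw [← h1, ← h2]
        abel
      · rintro ⟨w, rfl⟩
        rw [pushE_comp, hY.1, pushE_zero]

end Helpers

/-- If `f• : ⟨X•,δ⟩ → ⟨Y•,ρ⟩` is a morphism of `E`-attached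
complexes which is a homotopy equivalence of complexes, then `⟨X•,δ⟩` is an
`n`-exangle if and only if `⟨Y•,ρ⟩` is. -/
theorem statement_4 (hn : 0 < n) (E : Cᵒᵖ ⥤ C ⥤ AddCommGrpCat.{w})
    [E.Additive] [∀ B : Cᵒᵖ, (E.obj B).Additive]
    (X Y : NComplex C n)
    (δ : (E.obj (op (X.obj (n + 1)))).obj (X.obj 0))
    (ρ : (E.obj (op (Y.obj (n + 1)))).obj (Y.obj 0))
    (hX : IsAttached E X δ) (hY : IsAttached E Y ρ)
    (f : NComplexHom X Y)
    (hf : pushE E (f.f 0) δ = pullE E (f.f (n + 1)) ρ)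
    (hfeq : IsHomotopyEquiv f) :
    IsExangle E X δ ↔ IsExangle E Y ρ := by
  obtain ⟨g, ⟨φ, hφ⟩, ⟨ψ, hψ⟩⟩ := hfeq
  -- `g` is automatically compatible with `δ` and `ρ`
  have hfg0 : f.f 0 ≫ g.f 0 = 𝟙 (X.obj 0) - X.d 0 ≫ φ 0 := by
    have := hφ.1
    simp only [NComplexHom.comp_f, NComplexHom.id_f] at this
    rw [← this]; abel
  have hgft : g.f (n + 1) ≫ f.f (n + 1) = 𝟙 (Y.obj (n + 1)) - ψ n ≫ Y.d n := by
    have := hψ.2.2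
    simp only [NComplexHom.comp_f, NComplexHom.id_f] at this
    rw [← this]; abel
  have hpullgf : pullE E (g.f (n + 1) ≫ f.f (n + 1)) ρ = ρ := by
    rw [hgft, pullE_sub, pullE_id, pullE_comp, hY.2, pullE_zero, sub_zero]
  have hpushfg : pushE E (f.f 0 ≫ g.f 0) δ = δ := by
    rw [hfg0, pushE_sub, pushE_id, pushE_comp, hX.1, pushE_zero, sub_zero]
  have hg : pushE E (g.f 0) ρ = pullE E (g.f (n + 1)) δ := by
    calc pushE E (g.f 0) ρ
        = pushE E (g.f 0) (pullE E (g.f (n + 1) ≫ f.f (n + 1)) ρ) := by rw [hpullgf]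
      _ = pushE E (g.f 0) (pullE E (g.f (n + 1)) (pullE E (f.f (n + 1)) ρ)) := by
          rw [pullE_comp]
      _ = pushE E (g.f 0) (pullE E (g.f (n + 1)) (pushE E (f.f 0) δ)) := by rw [hf]
      _ = pullE E (g.f (n + 1)) (pushE E (g.f 0) (pushE E (f.f 0) δ)) := by
          rw [pushE_pullE]
      _ = pullE E (g.f (n + 1)) (pushE E (f.f 0 ≫ g.f 0) δ) := by rw [pushE_comp]
      _ = pullE E (g.f (n + 1)) δ := by rw [hpushfg]
  constructor
  · exact fun hXe => isExangle_of_homotopy E X Y δ ρ hY f g hf hg ψ hψ hXe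
  · exact fun hYe => isExangle_of_homotopy E Y X ρ δ hX g f hg hf φ hφ hYe

end NExangulated
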